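/- arXiv:2311.06257 — 2 statements merged into one kernel-verified Lean document; each statement's English description precedes it below -/
import Mathlib

section
/- (Theorem 3.5(b), Euclidean case.) Let p̄ ∈ F and suppose ψ_u : E → ℝ (u = 1,…,t) are convex at p̄ and directionally differentiable at p̄. Suppose there exists an index c ∈ {1,…,l} such that the interval-valued objective φ_c is CW-convex at p̄ and weakly directionally differentiable at p̄, and there exist scalars λ^C > 0, λ^W > 0 and μ_u ≥ 0 (u = 1,…,t) such that: (iii) for all p ∈ E, λ^C (φ_c^C)'(p̄; p − p̄) + λ^W (φ_c^W)'(p̄; p − p̄) + Σ_{u=1}^t μ_u ψ_u'(p̄; p − p̄) ≥ 0; and (iv) μ_u ψ_u(p̄) = 0 for all u. Then p̄ is a weakly type-II Pareto optimal solution of (MIVOP2). -/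
/-- One-sided directional derivative of `f` at `p` in direction `w`, with value `d`. -/
def HasDirDeriv {V : Type*} [NormedAddCommGroup V] [NormedSpace ℝ V]
    (f : V → ℝ) (p w : V) (d : ℝ) : Prop :=
  Filter.Tendsto (fun α : ℝ => (f (p + α • w) - f p) / α)
    (nhdsWithin 0 (Set.Ioi 0)) (nhds d)

/-- `f` is convex at the point `p` (relative to the convex set `E`). -/
def ConvexAtPt {V : Type*} [NormedAddCommGroup V] [NormedSpace ℝ V]
    (E : Set V) (f : V → ℝ) (p : V) : Prop :=
  ∀ q ∈ E, ∀ α : ℝ, 0 ≤ α → α ≤ 1 →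
    f ((1 - α) • p + α • q) ≤ (1 - α) * f p + α * f q

/-- `f` (with directional-derivative function `f'` at `pbar`) is pseudo-convex at `pbar`. -/
def PseudoConvexAt {V : Type*} [NormedAddCommGroup V] [NormedSpace ℝ V]
    (E : Set V) (f : V → ℝ) (f' : V → ℝ) (pbar : V) : Prop :=
  ∀ p ∈ E, f p < f pbar → f' (p - pbar) < 0

/-- `f` (with directional-derivative function `f'` at `pbar`) is strictly
pseudo-convex at `pbar`. -/
def StrictPseudoConvexAt {V : Type*} [NormedAddCommGroup V] [NormedSpace ℝ V]
    (E : Set V) (f : V → ℝ) (f' : V → ℝ) (pbar : V) : Prop :=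
  ∀ p ∈ E, p ≠ pbar → f p ≤ f pbar → f' (p - pbar) < 0

/-- `[aL, aU] ≤_LU [bL, bU]`. -/
def LUle (aL aU bL bU : ℝ) : Prop := aL ≤ bL ∧ aU ≤ bU

/-- `[aL, aU] <_LU [bL, bU]`. -/
def LUlt (aL aU bL bU : ℝ) : Prop := LUle aL aU bL bU ∧ (aL ≠ bL ∨ aU ≠ bU)

/-- `[aL, aU] ≤_CW [bL, bU]`. -/
def CWle (aL aU bL bU : ℝ) : Prop :=
  (aL + aU) / 2 ≤ (bL + bU) / 2 ∧ (aU - aL) / 2 ≤ (bU - bL) / 2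

/-- `[aL, aU] <_CW [bL, bU]`. -/
def CWlt (aL aU bL bU : ℝ) : Prop := CWle aL aU bL bU ∧ (aL ≠ bL ∨ aU ≠ bU)


/-- A function convex at `pbar` has its directional derivative bounded by the slope. -/
theorem dirDeriv_le_of_convexAt {V : Type*} [NormedAddCommGroup V] [NormedSpace ℝ V]
    {E : Set V} {f : V → ℝ} {pbar p : V} {d : ℝ}
    (hconv : ConvexAtPt E f pbar) (hp : p ∈ E)
    (hd : HasDirDeriv f pbar (p - pbar) d) : d ≤ f p - f pbar := by
  refine le_of_tendsto hd ?_
  filter_upwards [Ioo_mem_nhdsGT_of_mem (by norm_num : (0:ℝ) ∈ Set.Ico 0 1)] with α hα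
  have h0 : 0 < α := hα.1
  have h1 : α ≤ 1 := le_of_lt hα.2
  have key : f (pbar + α • (p - pbar)) ≤ (1 - α) * f pbar + α * f p := by
    have := hconv p hp α (le_of_lt h0) h1
    have e : (1 - α) • pbar + α • p = pbar + α • (p - pbar) := by
      rw [smul_sub, sub_smul, one_smul]; abel
    rwa [e] at this
  rw [div_le_iff₀ h0]
  nlinarith [key]

/-- Theorem 3.5(b), Euclidean case: KKT sufficiency, via a single
CW-convex objective `φ_c`, for weakly type-II Pareto optimal solutions. -/
theorem kkt_weak_type_II_CW_convex
    {V : Type*} [NormedAddCommGroup V] [NormedSpace ℝ V]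
    (E : Set V) (hEne : E.Nonempty) (hEopen : IsOpen E) (hEconv : Convex ℝ E)
    (l t : ℕ) (φL φU : Fin l → V → ℝ) (ψ : Fin t → V → ℝ)
    (hφint : ∀ s, ∀ x ∈ E, φL s x ≤ φU s x)
    (pbar : V) (hpbarE : pbar ∈ E) (hpbarF : ∀ u, ψ u pbar ≤ 0)
    (ψ' : Fin t → V → ℝ)
    (hψd : ∀ u w, HasDirDeriv (ψ u) pbar w (ψ' u w))
    (hψc : ∀ u, ConvexAtPt E (ψ u) pbar)
    (c : Fin l)
    (φcL' φcU' : V → ℝ)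
    (hφLd : ∀ w, HasDirDeriv (φL c) pbar w (φcL' w))
    (hφUd : ∀ w, HasDirDeriv (φU c) pbar w (φcU' w))
    -- CW-convexity of `φ_c` at `pbar`
    (hφCc : ConvexAtPt E (fun x => (φL c x + φU c x) / 2) pbar)
    (hφWc : ConvexAtPt E (fun x => (φU c x - φL c x) / 2) pbar)
    (lamC lamW : ℝ) (μ : Fin t → ℝ)
    (hlamC : 0 < lamC) (hlamW : 0 < lamW) (hμ : ∀ u, 0 ≤ μ u)
    (hkkt : ∀ p ∈ E,
      0 ≤ lamC * ((φcL' (p - pbar) + φcU' (p - pbar)) / 2)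
          + lamW * ((φcU' (p - pbar) - φcL' (p - pbar)) / 2)
          + ∑ u, μ u * ψ' u (p - pbar))
    (hcs : ∀ u, μ u * ψ u pbar = 0) :
    ¬ ∃ phat, (phat ∈ E ∧ ∀ u, ψ u phat ≤ 0) ∧
      (∀ s, CWlt (φL s phat) (φU s phat) (φL s pbar) (φU s pbar)) := by
  rintro ⟨phat, ⟨hpE, hpF⟩, hlt⟩
  set d := phat - pbar with hd
  -- directional derivatives of the center and width functions
  have hCd : HasDirDeriv (fun x => (φL c x + φU c x) / 2) pbar d
      ((φcL' d + φcU' d) / 2) := by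
    have := ((hφLd d).add (hφUd d)).div_const 2
    refine this.congr' ?_
    filter_upwards with α
    ring
  have hWd : HasDirDeriv (fun x => (φU c x - φL c x) / 2) pbar d
      ((φcU' d - φcL' d) / 2) := by
    have := ((hφUd d).sub (hφLd d)).div_const 2
    refine this.congr' ?_
    filter_upwards with α
    ring
  have hCle : (φcL' d + φcU' d) / 2 ≤
      (φL c phat + φU c phat) / 2 - (φL c pbar + φU c pbar) / 2 :=
    dirDeriv_le_of_convexAt hφCc hpE hCd
  have hWle : (φcU' d - φcL' d) / 2 ≤
      (φU c phat - φL c phat) / 2 - (φU c pbar - φL c pbar) / 2 :=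
    dirDeriv_le_of_convexAt hφWc hpE hWd
  have hψle : ∀ u, ψ' u d ≤ ψ u phat - ψ u pbar := fun u =>
    dirDeriv_le_of_convexAt (hψc u) hpE (hψd u d)
  have hsum : ∑ u, μ u * ψ' u d ≤ 0 := by
    calc ∑ u, μ u * ψ' u d ≤ ∑ u, μ u * ψ u phat := by
          apply Finset.sum_le_sum
          intro u _
          have := mul_le_mul_of_nonneg_left (hψle u) (hμ u)
          have hcsu := hcs u
          nlinarith
      _ ≤ 0 := Finset.sum_nonpos (fun u _ =>
          mul_nonpos_of_nonneg_of_nonpos (hμ u) (hpF u))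
  obtain ⟨⟨hCW1, hCW2⟩, hne⟩ := hlt c
  -- at least one of the center / width inequalities is strict
  have hstrict : (φL c phat + φU c phat) / 2 < (φL c pbar + φU c pbar) / 2 ∨
      (φU c phat - φL c phat) / 2 < (φU c pbar - φL c pbar) / 2 := by
    by_contra h
    push_neg at h
    have e1 : (φL c phat + φU c phat) / 2 = (φL c pbar + φU c pbar) / 2 :=
      le_antisymm hCW1 h.1
    have e2 : (φU c phat - φL c phat) / 2 = (φU c pbar - φL c pbar) / 2 :=
      le_antisymm hCW2 h.2
    rcases hne with hne | hne <;> apply hne <;> linarith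
  have hobj : lamC * ((φL c phat + φU c phat) / 2 - (φL c pbar + φU c pbar) / 2)
      + lamW * ((φU c phat - φL c phat) / 2 - (φU c pbar - φL c pbar) / 2) < 0 := by
    rcases hstrict with h | h
    · nlinarith [mul_le_mul_of_nonneg_left hCW2 (le_of_lt hlamW)]
    · nlinarith [mul_le_mul_of_nonneg_left hCW1 (le_of_lt hlamC)]
  have hkkt' := hkkt phat hpE
  have h1 := mul_le_mul_of_nonneg_left hCle (le_of_lt hlamC)
  have h2 := mul_le_mul_of_nonneg_left hWle (le_of_lt hlamW)
  rw [← hd] at hkkt'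
  nlinarith
end

section
/- (Theorem 3.5(c), Euclidean case.) Let p̄ ∈ F and suppose ψ_u : E → ℝ (u = 1,…,t) are convex at p̄ and directionally differentiable at p̄. Suppose there exists an index c ∈ {1,…,l} such that the interval-valued objective φ_c is CW-convex at p̄ and weakly directionally differentiable at p̄, and there exist scalars λ^L > 0, λ^U > 0 and μ_u ≥ 0 (u = 1,…,t) such that: (v) λ^L < λ^U; (vi) for all p ∈ E, λ^L (φ_c^L)'(p̄; p − p̄) + λ^U (φ_c^U)'(p̄; p − p̄) + Σ_{u=1}^t μ_u ψ_u'(p̄; p − p̄) ≥ 0; and (vii) μ_u ψ_u(p̄) = 0 for all u. Then p̄ is a weakly type-II Pareto optimal solution of (MIVOP2). -/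
/-- A convex-at-a-point function's directional derivative is bounded by the secant. -/
lemma dirDeriv_le_of_convexAtPt {V : Type*} [NormedAddCommGroup V] [NormedSpace ℝ V]
    (E : Set V) (f : V → ℝ) (pbar q : V) (d : ℝ)
    (hpbar : pbar ∈ E) (hq : q ∈ E)
    (hconv : ConvexAtPt E f pbar)
    (hd : HasDirDeriv f pbar (q - pbar) d) :
    d ≤ f q - f pbar := by
  have hle : ∀ᶠ α in nhdsWithin (0:ℝ) (Set.Ioi 0),
      (f (pbar + α • (q - pbar)) - f pbar) / α ≤ f q - f pbar := by
    filter_upwards [Ioc_mem_nhdsGT_of_mem (by norm_num : (0:ℝ) ∈ Set.Ico 0 1)]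
      with α hα
    obtain ⟨hα0, hα1⟩ := hα
    have hpt : pbar + α • (q - pbar) = (1 - α) • pbar + α • q := by
      simp [smul_sub, sub_smul]; abel
    have := hconv q hq α (le_of_lt hα0) hα1
    rw [← hpt] at this
    rw [div_le_iff₀ hα0]
    nlinarith [this]
  exact le_of_tendsto hd hle

/-- Theorem 3.5(c), Euclidean case: KKT sufficiency, via a single
CW-convex objective `φ_c` with LU multipliers `λ^L < λ^U`, for weakly type-II
Pareto optimal solutions. -/
theorem kkt_weak_type_II_CW_convex_LU_multipliers
    {V : Type*} [NormedAddCommGroup V] [NormedSpace ℝ V]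
    (E : Set V) (hEne : E.Nonempty) (hEopen : IsOpen E) (hEconv : Convex ℝ E)
    (l t : ℕ) (φL φU : Fin l → V → ℝ) (ψ : Fin t → V → ℝ)
    (hφint : ∀ s, ∀ x ∈ E, φL s x ≤ φU s x)
    (pbar : V) (hpbarE : pbar ∈ E) (hpbarF : ∀ u, ψ u pbar ≤ 0)
    (ψ' : Fin t → V → ℝ)
    (hψd : ∀ u w, HasDirDeriv (ψ u) pbar w (ψ' u w))
    (hψc : ∀ u, ConvexAtPt E (ψ u) pbar)
    (c : Fin l)
    (φcL' φcU' : V → ℝ)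
    (hφLd : ∀ w, HasDirDeriv (φL c) pbar w (φcL' w))
    (hφUd : ∀ w, HasDirDeriv (φU c) pbar w (φcU' w))
    -- CW-convexity of `φ_c` at `pbar`
    (hφCc : ConvexAtPt E (fun x => (φL c x + φU c x) / 2) pbar)
    (hφWc : ConvexAtPt E (fun x => (φU c x - φL c x) / 2) pbar)
    (lamL lamU : ℝ) (μ : Fin t → ℝ)
    (hlamL : 0 < lamL) (hlamU : 0 < lamU) (hμ : ∀ u, 0 ≤ μ u)
    (hlamLU : lamL < lamU)
    (hkkt : ∀ p ∈ E,
      0 ≤ lamL * φcL' (p - pbar) + lamU * φcU' (p - pbar)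
          + ∑ u, μ u * ψ' u (p - pbar))
    (hcs : ∀ u, μ u * ψ u pbar = 0) :
    ¬ ∃ phat, (phat ∈ E ∧ ∀ u, ψ u phat ≤ 0) ∧
      (∀ s, CWlt (φL s phat) (φU s phat) (φL s pbar) (φU s pbar)) := by
  rintro ⟨phat, ⟨hphatE, hphatψ⟩, hlt⟩
  obtain ⟨⟨hC, hW⟩, hne⟩ := hlt c
  -- combined convex function h = lamL * φL c + lamU * φU c
  set h : V → ℝ := fun x => lamL * φL c x + lamU * φU c x with hh
  have hd : HasDirDeriv h pbar (phat - pbar) (lamL * φcL' (phat - pbar) + lamU * φcU' (phat - pbar)) := by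
    have h1 := hφLd (phat - pbar)
    have h2 := hφUd (phat - pbar)
    have := (h1.const_mul lamL).add (h2.const_mul lamU)
    refine this.congr (fun α => ?_)
    simp [hh]; ring
  have hconvh : ConvexAtPt E h pbar := by
    intro q hq α h0 h1
    have hCq := hφCc q hq α h0 h1
    have hWq := hφWc q hq α h0 h1
    simp only [hh]
    nlinarith [hCq, hWq]
  have hhle : lamL * φcL' (phat - pbar) + lamU * φcU' (phat - pbar) ≤ h phat - h pbar :=
    dirDeriv_le_of_convexAtPt E h pbar phat _ hpbarE hphatE hconvh hd
  -- strictness of h at phat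
  have hstrict : h phat < h pbar := by
    have hCW : (φL c phat + φU c phat) / 2 < (φL c pbar + φU c pbar) / 2 ∨
        (φU c phat - φL c phat) / 2 < (φU c pbar - φL c pbar) / 2 := by
      by_contra hcon
      push_neg at hcon
      obtain ⟨h1, h2⟩ := hcon
      have e1 : (φL c phat + φU c phat) / 2 = (φL c pbar + φU c pbar) / 2 := le_antisymm hC h1
      have e2 : (φU c phat - φL c phat) / 2 = (φU c pbar - φL c pbar) / 2 := le_antisymm hW h2
      rcases hne with h | h <;> apply h <;> linarith
    rcases hCW with h | h <;> simp only [hh] <;> nlinarith [hC, hW]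
  -- ψ terms
  have hψle : ∀ u, μ u * ψ' u (phat - pbar) ≤ 0 := by
    intro u
    have := dirDeriv_le_of_convexAtPt E (ψ u) pbar phat _ hpbarE hphatE (hψc u) (hψd u (phat - pbar))
    have hμu := hμ u
    have hcsu := hcs u
    have hψu := hphatψ u
    nlinarith [mul_le_mul_of_nonneg_left this hμu]
  have hsum : ∑ u, μ u * ψ' u (phat - pbar) ≤ 0 :=
    Finset.sum_nonpos fun u _ => hψle u
  have := hkkt phat hphatE
  linarith
end
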